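/- For all real numbers x and η, and every positive integer r, the inequality |sign(x+η)·|x+η|^((r-1)/r) − sign(x)·|x|^((r-1)/r)| ≤ 2^(1/r)·|η|^((r-1)/r) holds. -/

import Mathlib

open scoped NNReal


/-- Signed power: `⌈y⌋^p = |y|^p * sign y`. -/
noncomputable def spow (p : ℝ) (y : ℝ) : ℝ := |y| ^ p * Real.sign y

lemma spow_of_nonneg {p : ℝ} (hp : 0 < p) {y : ℝ} (hy : 0 ≤ y) : spow p y = y ^ p := by
  rcases hy.eq_or_lt with rfl | h
  · simp [spow, Real.sign_zero, Real.zero_rpow hp.ne']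
  · simp [spow, abs_of_pos h, Real.sign_of_pos h]

lemma spow_of_nonpos {p : ℝ} (hp : 0 < p) {y : ℝ} (hy : y ≤ 0) : spow p y = -(-y) ^ p := by
  rcases hy.eq_or_lt with rfl | h
  · simp [spow, Real.sign_zero, Real.zero_rpow hp.ne']
  · simp [spow, abs_of_neg h, Real.sign_of_neg h]

lemma radd {a b p : ℝ} (ha : 0 ≤ a) (hb : 0 ≤ b) (hp : 0 ≤ p) (hp1 : p ≤ 1) :
    (a + b) ^ p ≤ a ^ p + b ^ p := by
  have h := NNReal.rpow_add_le_add_rpow a.toNNReal b.toNNReal hp hp1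
  have h2 := NNReal.coe_le_coe.2 h
  push_cast [NNReal.coe_rpow, Real.coe_toNNReal a ha, Real.coe_toNNReal b hb] at h2
  exact h2

lemma rmulN (A B : ℝ≥0) {p : ℝ} (hp : 0 < p) (hp1 : p ≤ 1) :
    A ^ p + B ^ p ≤ 2 ^ (1 - p) * (A + B) ^ p := by
  have hq : 1 ≤ 1 / p := (le_div_iff₀ hp).2 (by linarith)
  have h := NNReal.rpow_add_le_mul_rpow_add_rpow (A ^ p) (B ^ p) hq
  rw [← NNReal.rpow_mul A, ← NNReal.rpow_mul B, mul_one_div, div_self hp.ne',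
    NNReal.rpow_one, NNReal.rpow_one] at h
  have h2 := NNReal.rpow_le_rpow h hp.le
  rw [← NNReal.rpow_mul, one_div, inv_mul_cancel₀ hp.ne', NNReal.rpow_one,
    NNReal.mul_rpow, ← NNReal.rpow_mul] at h2
  have he : (p⁻¹ - 1) * p = 1 - p := by field_simp
  rwa [he] at h2

lemma rmul {a b p : ℝ} (ha : 0 ≤ a) (hb : 0 ≤ b) (hp : 0 < p) (hp1 : p ≤ 1) :
    a ^ p + b ^ p ≤ 2 ^ (1 - p) * (a + b) ^ p := by
  have h := NNReal.coe_le_coe.2 (rmulN a.toNNReal b.toNNReal hp hp1)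
  push_cast [NNReal.coe_rpow, Real.coe_toNNReal a ha, Real.coe_toNNReal b hb] at h
  exact h

lemma key_nn {p : ℝ} (hp : 0 < p) (hp1 : p ≤ 1) {a b : ℝ} (hb : 0 ≤ b) (hba : b ≤ a) :
    a ^ p - b ^ p ≤ (a - b) ^ p := by
  have h := radd (a := a - b) (b := b) (by linarith) hb hp.le hp1
  rw [sub_add_cancel] at h
  linarith

lemma two_rpow_ge_one {p : ℝ} (hp1 : p ≤ 1) : (1 : ℝ) ≤ 2 ^ (1 - p) :=
  Real.one_le_rpow (by norm_num) (by linarith)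

lemma abs_sign_le (y : ℝ) : |Real.sign y| ≤ 1 := by
  rcases lt_trichotomy y 0 with h|h|h
  · simp [Real.sign_of_neg h]
  · simp [h, Real.sign_zero]
  · simp [Real.sign_of_pos h]

lemma key {p : ℝ} (hp : 0 < p) (hp1 : p ≤ 1) (a b : ℝ) :
    |spow p a - spow p b| ≤ 2 ^ (1 - p) * |a - b| ^ p := by
  -- wlog b ≤ a
  wlog hba : b ≤ a generalizing a b with H
  · have := H b a (le_of_not_ge hba)
    rwa [abs_sub_comm (spow p b), abs_sub_comm b a] at this
  have habs : 0 ≤ a - b := by linarith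
  rw [abs_of_nonneg habs]
  rcases le_or_gt 0 b with hb | hb
  · -- both nonneg
    have ha : 0 ≤ a := le_trans hb hba
    have hnn : (0:ℝ) ≤ a ^ p - b ^ p := sub_nonneg.2 (Real.rpow_le_rpow hb hba hp.le)
    rw [spow_of_nonneg hp ha, spow_of_nonneg hp hb, abs_of_nonneg hnn]
    calc a ^ p - b ^ p ≤ (a - b) ^ p := key_nn hp hp1 hb hba
      _ ≤ 2 ^ (1 - p) * (a - b) ^ p := by
          nth_rewrite 1 [← one_mul ((a-b)^p)]
          exact mul_le_mul_of_nonneg_right (two_rpow_ge_one hp1)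
            (Real.rpow_nonneg habs p)
  · rcases le_or_gt a 0 with ha | ha
    · -- both nonpos
      rw [spow_of_nonpos hp ha, spow_of_nonpos hp hb.le]
      have h1 : 0 ≤ -a := by linarith
      have h2 : -a ≤ -b := by linarith
      have h := key_nn hp hp1 h1 h2
      have heq : -b - -a = a - b := by ring
      rw [heq] at h
      have hnn : (0:ℝ) ≤ (-b) ^ p - (-a) ^ p :=
        sub_nonneg.2 (Real.rpow_le_rpow h1 h2 hp.le)
      rw [show -(-a)^p - -(-b)^p = (-b)^p - (-a)^p by ring, abs_of_nonneg hnn]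
      calc (-b) ^ p - (-a) ^ p ≤ (a - b) ^ p := h
        _ ≤ 2 ^ (1 - p) * (a - b) ^ p := by
            nth_rewrite 1 [← one_mul ((a-b)^p)]
            exact mul_le_mul_of_nonneg_right (two_rpow_ge_one hp1)
              (Real.rpow_nonneg habs p)
    · -- b < 0 < a
      rw [spow_of_nonneg hp ha.le, spow_of_nonpos hp hb.le]
      have h1 : 0 ≤ -b := by linarith
      have hnn : (0:ℝ) ≤ a ^ p + (-b) ^ p :=
        add_nonneg (Real.rpow_nonneg ha.le p) (Real.rpow_nonneg h1 p)
      rw [show a ^ p - -(-b)^p = a ^ p + (-b)^p by ring, abs_of_nonneg hnn]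
      have h := rmul ha.le h1 hp hp1
      rwa [show a + -b = a - b by ring] at h

theorem stmt0 (x η : ℝ) (r : ℕ) (hr : 0 < r) :
    |spow (((r : ℝ) - 1) / r) (x + η) - spow (((r : ℝ) - 1) / r) x|
      ≤ (2 : ℝ) ^ ((1 : ℝ) / r) * |η| ^ (((r : ℝ) - 1) / r) := by
  rcases Nat.lt_or_ge r 2 with h2 | h2
  · -- r = 1
    interval_cases r
    simp only [Nat.cast_one, sub_self, zero_div, Real.rpow_zero, one_div]
    norm_num
    unfold spow
    simp only [Real.rpow_zero, one_mul]
    calc |Real.sign (x + η) - Real.sign x| ≤ |Real.sign (x+η)| + |Real.sign x| := abs_sub _ _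
      _ ≤ 1 + 1 := add_le_add (abs_sign_le _) (abs_sign_le _)
      _ = 2 := by norm_num
  · set p : ℝ := ((r : ℝ) - 1) / r with hpdef
    have hr1 : (1 : ℝ) ≤ (r : ℝ) - 1 := by
      have : (2 : ℝ) ≤ r := by exact_mod_cast h2
      linarith
    have hrpos : (0 : ℝ) < r := by positivity
    have hp : 0 < p := by positivity
    have hp1 : p ≤ 1 := by
      rw [hpdef, div_le_one hrpos]; linarith
    have h1p : 1 - p = 1 / r := by
      field_simp [hpdef]
      rw [hpdef, sub_mul, div_mul_cancel₀ _ hrpos.ne']; ring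
    have h := key hp hp1 (x + η) x
    rwa [add_sub_cancel_left, h1p] at h
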